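/- Consider the action of SU(2) × O(2) on ℂ² ⊕ ℂ², where B ∈ SU(2) acts on the first summand ℂ² by matrix multiplication and T ∈ O(2) acts on the second summand ℂ² by the real matrix T with entries regarded as complex numbers. If u ∈ ℂ² is nonzero and w = (w₁, w₂) ∈ ℂ² is nonzero with w₁, w₂ linearly dependent over ℝ (as elements of ℂ regarded as a real vector space), then the stabilizer of (u, w) has exactly two elements; in particular it is isomorphic to the cyclic group of order 2. -/

import Mathlib

open Matrix

/-- The stabilizer of `(u, w) ∈ ℂ² ⊕ ℂ²` for the action of `SU(2) × O(2)`, where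
`B ∈ SU(2)` acts on the first summand by matrix multiplication and `T ∈ O(2)` acts on
the second summand via its complexification. -/
def stabilizer (u w : Fin 2 → ℂ) :
    Set (Matrix (Fin 2) (Fin 2) ℂ × Matrix (Fin 2) (Fin 2) ℝ) :=
  {p | p.1 ∈ Matrix.specialUnitaryGroup (Fin 2) ℂ ∧
       p.2 ∈ Matrix.orthogonalGroup (Fin 2) ℝ ∧
       p.1.mulVec u = u ∧ (p.2.map Complex.ofReal).mulVec w = w}


lemma su2_fix {B : Matrix (Fin 2) (Fin 2) ℂ} (hB : B ∈ Matrix.specialUnitaryGroup (Fin 2) ℂ)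
    {u : Fin 2 → ℂ} (hu : u ≠ 0) (h : B.mulVec u = u) : B = 1 := by
  rw [Matrix.mem_specialUnitaryGroup_iff] at hB
  obtain ⟨hU, hdet⟩ := hB
  have hdet0 : (B - 1).det = 0 := by
    rw [← Matrix.exists_mulVec_eq_zero_iff]
    exact ⟨u, hu, by simp [Matrix.sub_mulVec, h]⟩
  rw [Matrix.det_fin_two] at hdet hdet0
  simp only [Matrix.sub_apply, Matrix.one_apply] at hdet0
  norm_num at hdet0
  have htr : B 0 0 + B 1 1 = 2 := by linear_combination hdet - hdet0
  have h1 := congrFun (congrFun hU.1 0) 0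
  have h2 := congrFun (congrFun hU.1 1) 1
  simp only [Matrix.mul_apply, Fin.sum_univ_two, Matrix.one_apply, Matrix.star_apply,
    Matrix.star_eq_conjTranspose, Matrix.conjTranspose_apply, RCLike.star_def] at h1 h2
  norm_num at h1 h2
  have r1 := congrArg Complex.re h1
  have r2 := congrArg Complex.re h2
  have t1 := congrArg Complex.re htr
  have t2 := congrArg Complex.im htr
  simp only [Complex.add_re, Complex.add_im, Complex.mul_re, Complex.mul_im,
    Complex.conj_re, Complex.conj_im, Complex.one_re] at r1 r2 t1 t2
  norm_num [Complex.ext_iff] at t1 t2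
  have hx0 : (B 0 0).re = 1 := by nlinarith [sq_nonneg ((B 0 0).re - 1), sq_nonneg ((B 1 1).re - 1), sq_nonneg ((B 0 0).im), sq_nonneg ((B 1 1).im), sq_nonneg ((B 1 0).re), sq_nonneg ((B 1 0).im), sq_nonneg ((B 0 1).re), sq_nonneg ((B 0 1).im)]
  have hy0 : (B 0 0).im = 0 := by nlinarith [sq_nonneg ((B 0 0).re - 1), sq_nonneg ((B 1 1).re - 1), sq_nonneg ((B 0 0).im + (B 1 1).im), sq_nonneg ((B 1 0).re), sq_nonneg ((B 1 0).im), sq_nonneg ((B 0 1).re), sq_nonneg ((B 0 1).im)]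
  have hB00 : B 0 0 = 1 := Complex.ext (by simpa using hx0) (by simpa using hy0)
  have hB11 : B 1 1 = 1 := by linear_combination htr - hB00
  have hB10 : B 1 0 = 0 := by
    have : Complex.normSq (B 1 0) = 0 := by
      nlinarith [Complex.normSq_apply (B 1 0)]
    exact Complex.normSq_eq_zero.mp this
  have hB01 : B 0 1 = 0 := by
    have : Complex.normSq (B 0 1) = 0 := by
      have e1 : (B 1 1).re = 1 := by rw [hB11]; simp
      have e2 : (B 1 1).im = 0 := by rw [hB11]; simp
      nlinarith [Complex.normSq_apply (B 0 1)]
    exact Complex.normSq_eq_zero.mp this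
  funext i j
  fin_cases i <;> fin_cases j <;> simp [hB00, hB01, hB10, hB11, Matrix.one_apply]

noncomputable def refl2 (v : Fin 2 → ℝ) : Matrix (Fin 2) (Fin 2) ℝ :=
  !![(v 0^2 - v 1^2)/(v 0^2 + v 1^2), 2*v 0*v 1/(v 0^2+v 1^2);
     2*v 0*v 1/(v 0^2+v 1^2), (v 1^2 - v 0^2)/(v 0^2+v 1^2)]

lemma o2_fix {T : Matrix (Fin 2) (Fin 2) ℝ} (hT : T ∈ Matrix.orthogonalGroup (Fin 2) ℝ)
    {v : Fin 2 → ℝ} (hv : v ≠ 0) (h : T.mulVec v = v) : T = 1 ∨ T = refl2 v := by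
  have hn : v 0 ^ 2 + v 1 ^ 2 ≠ 0 := by
    have : v 0 ≠ 0 ∨ v 1 ≠ 0 := by
      by_contra hc; push_neg at hc
      exact hv (funext fun i => by fin_cases i <;> simp [hc.1, hc.2])
    rcases this with h0 | h0 <;> positivity
  obtain ⟨a, b, c, d, rfl⟩ : ∃ a b c d, T = !![a, b; c, d] :=
    ⟨_, _, _, _, (Matrix.etaExpand_eq T).symm⟩
  have hab := congrFun (congrFun hT.2 0) 0
  have hmix := congrFun (congrFun hT.2 0) 1
  have hcd := congrFun (congrFun hT.2 1) 1
  simp only [Matrix.mul_apply, Fin.sum_univ_two, Matrix.one_apply, Matrix.star_apply,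
    star_trivial, Matrix.cons_val', Matrix.cons_val_zero, Matrix.cons_val_one,
    Matrix.head_cons, Matrix.empty_val', Matrix.cons_val_fin_one, Matrix.head_fin_const] at hab hmix hcd
  norm_num at hab hmix hcd
  have hv0 := congrFun h 0
  have hv1 := congrFun h 1
  simp [Matrix.mulVec, dotProduct, Fin.sum_univ_two] at hv0 hv1
  have hs2 : (a*d - b*c)^2 = 1 := by nlinarith [hab, hcd, hmix]
  have hs : a*d - b*c = 1 ∨ a*d - b*c = -1 := by
    rcases mul_eq_zero.mp (show (a*d-b*c-1)*(a*d-b*c+1) = 0 by nlinarith [hs2]) with h'|h'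
    · left; linarith
    · right; linarith
  rcases hs with hs | hs
  · left
    have hd : d = a := by linear_combination b*hmix + a*hs - d*hab
    have hc : c = -b := by linear_combination a*hmix - b*hs - c*hab
    rw [hd] at hv1; rw [hc] at hv1
    have k0 : ((a-1)^2 + b^2) * v 0 = 0 := by linear_combination (a-1)*hv0 - b*hv1
    have k1 : ((a-1)^2 + b^2) * v 1 = 0 := by linear_combination b*hv0 + (a-1)*hv1
    have hk : (a-1)^2 + b^2 = 0 := by
      by_contra hk
      exact hv (funext fun i => by
        fin_cases i
        · simpa [hk] using mul_eq_zero.mp k0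
        · simpa [hk] using mul_eq_zero.mp k1)
    have ha1 : a = 1 := by nlinarith [sq_nonneg (a-1), sq_nonneg b]
    have hb0 : b = 0 := by nlinarith [sq_nonneg (a-1), sq_nonneg b]
    subst ha1 hb0 hd hc
    funext i j
    fin_cases i <;> fin_cases j <;> simp [Matrix.one_apply]
  · right
    have hd : d = -a := by linear_combination b*hmix + a*hs - d*hab
    have hc : c = b := by linear_combination a*hmix - b*hs - c*hab
    rw [hd] at hv1; rw [hc] at hv1
    have ea : a * (v 0^2 + v 1^2) = v 0^2 - v 1^2 := by linear_combination v 0 * hv0 - v 1 * hv1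
    have eb : b * (v 0^2 + v 1^2) = 2 * v 0 * v 1 := by linear_combination v 1 * hv0 + v 0 * hv1
    subst hd hc
    funext i j
    fin_cases i <;> fin_cases j <;> simp [refl2] <;> field_simp <;> linarith [ea, eb]


variable {v : Fin 2 → ℝ}

lemma refl2_mem (hn : v 0 ^ 2 + v 1 ^ 2 ≠ 0) : refl2 v ∈ Matrix.orthogonalGroup (Fin 2) ℝ := by
  rw [Matrix.mem_orthogonalGroup_iff]
  funext i j
  fin_cases i <;> fin_cases j <;>
    simp [refl2, Matrix.mul_apply, Fin.sum_univ_two, Matrix.star_apply, Matrix.one_apply] <;>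
    field_simp <;> ring

lemma refl2_mulVec (hn : v 0 ^ 2 + v 1 ^ 2 ≠ 0) : (refl2 v).mulVec v = v := by
  funext i
  fin_cases i <;> simp [refl2, Matrix.mulVec, dotProduct, Fin.sum_univ_two] <;>
    field_simp <;> ring

lemma refl2_ne_one (hn : v 0 ^ 2 + v 1 ^ 2 ≠ 0) : refl2 v ≠ 1 := by
  intro h
  have h0 := congrFun (congrFun h 0) 0
  have h1 := congrFun (congrFun h 1) 1
  simp [refl2, Matrix.one_apply] at h0 h1
  field_simp at h0 h1
  exact hn (by linarith)

lemma refl2_sq (hn : v 0 ^ 2 + v 1 ^ 2 ≠ 0) : refl2 v * refl2 v = 1 := by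
  funext i j
  fin_cases i <;> fin_cases j <;>
    simp [refl2, Matrix.mul_apply, Fin.sum_univ_two, Matrix.one_apply] <;>
    field_simp <;> ring

lemma decomp (w : Fin 2 → ℂ) (hw : w ≠ 0)
    (hdep : ¬ LinearIndependent ℝ ![w 0, w 1]) :
    ∃ (v : Fin 2 → ℝ) (z : ℂ), v ≠ 0 ∧ z ≠ 0 ∧ ∀ i, w i = z * (v i : ℂ) := by
  rw [LinearIndependent.pair_iff] at hdep
  push_neg at hdep
  obtain ⟨r, s, hrs, hne⟩ := hdep
  rw [Complex.real_smul, Complex.real_smul] at hrs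
  have hv : (![s, -r] : Fin 2 → ℝ) ≠ 0 := by
    intro hz
    have h0 := congrFun hz 0
    have h1 := congrFun hz 1
    simp at h0 h1
    exact hne h1 h0
  by_cases hs : s = 0
  · have hr : r ≠ 0 := by intro h; exact hne h hs
    have hw0 : w 0 = 0 := by
      have : (r : ℂ) * w 0 = 0 := by rw [hs] at hrs; simpa using hrs
      rcases mul_eq_zero.mp this with h | h
      · exact absurd (Complex.ofReal_eq_zero.mp h) hr
      · exact h
    have hw1 : w 1 ≠ 0 := by
      intro h
      exact hw (funext fun i => by fin_cases i <;> simp [hw0, h])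
    refine ⟨![s, -r], w 1 / (-r : ℝ), hv, ?_, ?_⟩
    · exact div_ne_zero hw1 (by simpa using hr)
    · intro i
      fin_cases i
      · simp [hw0, hs]
      · have hrC : ((-r : ℝ) : ℂ) ≠ 0 := by simpa using hr
        show w 1 = w 1 / ((-r : ℝ) : ℂ) * ((![s, -r] 1 : ℝ) : ℂ)
        simp only [Matrix.cons_val_one, Matrix.head_cons, Matrix.cons_val_zero]
        rw [div_mul_cancel₀ _ hrC]
  · refine ⟨![s, -r], w 0 / (s : ℝ), hv, ?_, ?_⟩
    · have hsC : (s : ℂ) ≠ 0 := by simpa using hs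
      intro h
      have hw0 : w 0 = 0 := by
        rcases div_eq_zero_iff.mp h with h' | h'
        · exact h'
        · exact absurd h' hsC
      have hw1 : w 1 = 0 := by
        rw [hw0] at hrs
        simp only [mul_zero, zero_add] at hrs
        rcases mul_eq_zero.mp hrs with h' | h'
        · exact absurd h' hsC
        · exact h'
      exact hw (funext fun i => by fin_cases i <;> simp [hw0, hw1])
    · have hsC : (s : ℂ) ≠ 0 := by simpa using hs
      intro i
      fin_cases i
      · simp; field_simp
      · simp
        field_simp
        linear_combination hrs

lemma mulVec_complexify {T : Matrix (Fin 2) (Fin 2) ℝ} {v : Fin 2 → ℝ} {z : ℂ} (hz : z ≠ 0)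
    {w : Fin 2 → ℂ} (hw : ∀ i, w i = z * (v i : ℂ)) :
    (T.map Complex.ofReal).mulVec w = w ↔ T.mulVec v = v := by
  constructor
  · intro h
    funext i
    have hh := congrFun h i
    simp only [Matrix.mulVec, dotProduct, Fin.sum_univ_two, Matrix.map_apply, hw] at hh
    have h2 : ((T i 0 * v 0 + T i 1 * v 1 : ℝ) : ℂ) = ((v i : ℝ) : ℂ) := by
      apply mul_left_cancel₀ hz
      push_cast
      linear_combination hh
    simpa [Matrix.mulVec, dotProduct, Fin.sum_univ_two] using Complex.ofReal_inj.mp h2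
  · intro h
    funext i
    have hh := congrFun h i
    simp only [Matrix.mulVec, dotProduct, Fin.sum_univ_two] at hh
    simp only [Matrix.mulVec, dotProduct, Fin.sum_univ_two, Matrix.map_apply, hw]
    have := congrArg (fun x : ℝ => z * (x : ℂ)) hh
    push_cast at this
    linear_combination this

/-- If `u ≠ 0` and `w ≠ 0` with entries `w 0`, `w 1` linearly dependent over `ℝ`, then
the stabilizer of `(u, w)` under `SU(2) × O(2)` has exactly two elements; it contains
the identity and every element squares to the identity, so it is isomorphic to the
cyclic group of order 2. -/
theorem stmt15 (u w : Fin 2 → ℂ) (hu : u ≠ 0) (hw : w ≠ 0)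
    (hdep : ¬ LinearIndependent ℝ ![w 0, w 1]) :
    (∃ p q, p ≠ q ∧ stabilizer u w = {p, q}) ∧
    ((1, 1) ∈ stabilizer u w) ∧
    (∀ p ∈ stabilizer u w,
      p.1 * p.1 = (1 : Matrix (Fin 2) (Fin 2) ℂ) ∧
      p.2 * p.2 = (1 : Matrix (Fin 2) (Fin 2) ℝ)) := by
  obtain ⟨v, z, hv, hz, hwv⟩ := decomp w hw hdep
  have hn : v 0 ^ 2 + v 1 ^ 2 ≠ 0 := by
    have : v 0 ≠ 0 ∨ v 1 ≠ 0 := by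
      by_contra hc; push_neg at hc
      exact hv (funext fun i => by fin_cases i <;> simp [hc.1, hc.2])
    rcases this with h0 | h0 <;> positivity
  have hmap1 : ((1 : Matrix (Fin 2) (Fin 2) ℝ).map Complex.ofReal) = 1 :=
    Matrix.map_one Complex.ofReal Complex.ofReal_zero Complex.ofReal_one
  have key : stabilizer u w =
      {((1 : Matrix (Fin 2) (Fin 2) ℂ), (1 : Matrix (Fin 2) (Fin 2) ℝ)), (1, refl2 v)} := by
    ext p
    simp only [stabilizer, Set.mem_setOf_eq, Set.mem_insert_iff, Set.mem_singleton_iff]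
    constructor
    · rintro ⟨h1, h2, h3, h4⟩
      have hB := su2_fix h1 hu h3
      have hTv : p.2.mulVec v = v := (mulVec_complexify hz hwv).mp h4
      rcases o2_fix h2 hv hTv with hT | hT
      · left; exact Prod.ext_iff.mpr ⟨hB, hT⟩
      · right; exact Prod.ext_iff.mpr ⟨hB, hT⟩
    · rintro (rfl | rfl)
      · exact ⟨one_mem _, one_mem _, Matrix.one_mulVec u, by rw [hmap1, Matrix.one_mulVec]⟩
      · exact ⟨one_mem _, refl2_mem hn, Matrix.one_mulVec u,
          (mulVec_complexify hz hwv).mpr (refl2_mulVec hn)⟩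
  refine ⟨⟨(1, 1), (1, refl2 v), ?_, key⟩, ?_, ?_⟩
  · intro h
    exact refl2_ne_one hn (congrArg Prod.snd h).symm
  · rw [key]; exact Set.mem_insert _ _
  · intro p hp
    rw [key] at hp
    rcases hp with rfl | rfl
    · exact ⟨one_mul 1, one_mul 1⟩
    · exact ⟨one_mul 1, refl2_sq hn⟩
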